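/- Let Φ be m×n with RIP constant δ = δ_{|I₁|+|I₂|} < 1/2, and let A_{I₁} = P^⊥_{I₁} Φ where P^⊥_{I₁} is the orthogonal projection onto the complement of the column span of Φ_{I₁}. Then for any u ∈ ℝⁿ with supp(u) ⊆ I₂ and I₁ ∩ I₂ = ∅: (1 - δ/(1-δ))‖u‖₂² ≤ ‖A_{I₁} u‖₂² ≤ (1+δ)‖u‖₂². -/
import Mathlib


open Matrix BigOperators Finset

/-- squared Euclidean norm -/
noncomputable def n2sq {α : Type*} [Fintype α] (v : α → ℝ) : ℝ := ∑ i, (v i)^2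

/-- Euclidean norm -/
noncomputable def n2 {α : Type*} [Fintype α] (v : α → ℝ) : ℝ := Real.sqrt (n2sq v)

/-- sup norm -/
noncomputable def ninf {α : Type*} [Fintype α] (v : α → ℝ) : ℝ := ⨆ i, |v i|

/-- dot product -/
def dot {α : Type*} [Fintype α] (u v : α → ℝ) : ℝ := ∑ i, u i * v i

/-- column submatrix indexed by a finite index set -/
noncomputable def subCols {m n : ℕ} (Φ : Matrix (Fin m) (Fin n) ℝ) (I : Finset (Fin n)) :
    Matrix (Fin m) {j // j ∈ I} ℝ := Matrix.of fun i j => Φ i j.1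

/-- restriction of a vector to an index set -/
def restrict {n : ℕ} (x : Fin n → ℝ) (I : Finset (Fin n)) : {j // j ∈ I} → ℝ :=
  fun j => x j.1

/-- Moore–Penrose pseudoinverse (full column rank case) -/
noncomputable def pinv {m n : ℕ} (Φ : Matrix (Fin m) (Fin n) ℝ) (I : Finset (Fin n)) :
    Matrix {j // j ∈ I} (Fin m) ℝ :=
  ((subCols Φ I)ᵀ * subCols Φ I)⁻¹ * (subCols Φ I)ᵀ

/-- orthogonal projector onto the column span of `Φ_I` -/
noncomputable def proj {m n : ℕ} (Φ : Matrix (Fin m) (Fin n) ℝ) (I : Finset (Fin n)) :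
    Matrix (Fin m) (Fin m) ℝ := subCols Φ I * pinv Φ I

/-- projector onto the orthogonal complement of the column span of `Φ_I` -/
noncomputable def projPerp {m n : ℕ} (Φ : Matrix (Fin m) (Fin n) ℝ) (I : Finset (Fin n)) :
    Matrix (Fin m) (Fin m) ℝ := 1 - proj Φ I

/-- restricted isometry property of order `K` with constant `δ` -/
def RIP {m n : ℕ} (Φ : Matrix (Fin m) (Fin n) ℝ) (K : ℕ) (δ : ℝ) : Prop :=
  ∀ I : Finset (Fin n), I.card ≤ K → ∀ q : {j // j ∈ I} → ℝ,
    (1 - δ) * n2sq q ≤ n2sq ((subCols Φ I).mulVec q) ∧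
    n2sq ((subCols Φ I).mulVec q) ≤ (1 + δ) * n2sq q

lemma n2sq_nonneg {α : Type*} [Fintype α] (v : α → ℝ) : 0 ≤ n2sq v :=
  Finset.sum_nonneg fun i _ => sq_nonneg _

lemma n2sq_eq_zero {α : Type*} [Fintype α] {v : α → ℝ} (h : n2sq v = 0) : v = 0 := by
  funext i
  have := (Finset.sum_eq_zero_iff_of_nonneg (fun i _ => sq_nonneg (v i))).mp h i (mem_univ i)
  exact pow_eq_zero_iff (by norm_num) |>.mp this

lemma dot_eq {α : Type*} [Fintype α] (u v : α → ℝ) : dot u v = u ⬝ᵥ v := rfl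

lemma n2sq_eq_dot {α : Type*} [Fintype α] (v : α → ℝ) : n2sq v = dot v v := by
  simp [n2sq, dot, sq]

/-- extension by zero -/
noncomputable def ext0 {n : ℕ} (I : Finset (Fin n)) (c : {j // j ∈ I} → ℝ) : Fin n → ℝ :=
  fun j => if hj : j ∈ I then c ⟨j, hj⟩ else 0

lemma ext0_supp {n : ℕ} (I : Finset (Fin n)) (c : {j // j ∈ I} → ℝ) :
    ∀ j, ext0 I c j ≠ 0 → j ∈ I := by
  intro j hj; by_contra hc; exact hj (by simp [ext0, hc])

lemma n2sq_ext0 {n : ℕ} (I : Finset (Fin n)) (c : {j // j ∈ I} → ℝ) :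
    n2sq (ext0 I c) = n2sq c := by
  unfold n2sq
  rw [← Finset.sum_subset (Finset.subset_univ I)
    (by intro j _ hj; simp [ext0, hj]),
    ← Finset.sum_coe_sort I (fun j => (ext0 I c j)^2)]
  exact Finset.sum_congr rfl (by rintro ⟨j, hj⟩ _; simp [ext0, hj])

lemma mulVec_ext0 {m n : ℕ} (Φ : Matrix (Fin m) (Fin n) ℝ) (I : Finset (Fin n))
    (c : {j // j ∈ I} → ℝ) : Φ.mulVec (ext0 I c) = (subCols Φ I).mulVec c := by
  funext i
  unfold Matrix.mulVec dotProduct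
  rw [← Finset.sum_subset (Finset.subset_univ I)
    (by intro j _ hj; simp [ext0, hj]),
    ← Finset.sum_coe_sort I (fun j => Φ i j * ext0 I c j)]
  exact Finset.sum_congr rfl (by rintro ⟨j, hj⟩ _; simp [ext0, subCols, hj])

lemma ext0_restrict {n : ℕ} (I : Finset (Fin n)) (x : Fin n → ℝ)
    (hx : ∀ j, x j ≠ 0 → j ∈ I) : ext0 I (fun j => x j.1) = x := by
  funext j
  by_cases hj : j ∈ I
  · simp [ext0, hj]
  · simp only [ext0, dif_neg hj]
    by_contra hc; exact hj (hx j fun h => hc h.symm)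

/-- RIP for globally-indexed vectors with small support -/
lemma rip_global {m n K : ℕ} {δ : ℝ} {Φ : Matrix (Fin m) (Fin n) ℝ} (h : RIP Φ K δ)
    (S : Finset (Fin n)) (hS : S.card ≤ K) (x : Fin n → ℝ) (hx : ∀ j, x j ≠ 0 → j ∈ S) :
    (1 - δ) * n2sq x ≤ n2sq (Φ.mulVec x) ∧ n2sq (Φ.mulVec x) ≤ (1 + δ) * n2sq x := by
  have hre := ext0_restrict S x hx
  have h1 := h S hS (fun j => x j.1)
  rw [← mulVec_ext0 Φ S, hre] at h1
  rw [← n2sq_ext0 S (fun j => x j.1), hre] at h1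
  exact h1

lemma n2sq_smul {α : Type*} [Fintype α] (t : ℝ) (x : α → ℝ) :
    n2sq (t • x) = t^2 * n2sq x := by
  simp [n2sq, Finset.mul_sum, mul_pow]

lemma dot_mulVec_left {α β : Type*} [Fintype α] [Fintype β]
    (A : Matrix α β ℝ) (v : β → ℝ) (w : α → ℝ) :
    dot (A.mulVec v) w = dot v (Aᵀ.mulVec w) := by
  rw [dot_eq, dot_eq, dotProduct_comm, Matrix.dotProduct_mulVec, Matrix.mulVec_transpose,
    dotProduct_comm]

lemma n2sq_sub {α : Type*} [Fintype α] (v w : α → ℝ) :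
    n2sq (v - w) = n2sq v - 2 * dot v w + n2sq w := by
  unfold n2sq dot
  have e : ∀ i, (v i - w i)^2 = v i^2 - 2*(v i * w i) + w i^2 := fun i => by ring
  simp only [Pi.sub_apply, e]
  rw [Finset.sum_add_distrib, Finset.sum_sub_distrib, Finset.mul_sum]

lemma cross_raw {m n K : ℕ} {δ : ℝ} {Φ : Matrix (Fin m) (Fin n) ℝ} (h : RIP Φ K δ)
    (I J : Finset (Fin n)) (hd : Disjoint I J) (hK : I.card + J.card ≤ K)
    (x y : Fin n → ℝ) (hx : ∀ j, x j ≠ 0 → j ∈ I) (hy : ∀ j, y j ≠ 0 → j ∈ J) :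
    dot (Φ.mulVec x) (Φ.mulVec y) ≤ δ/2 * (n2sq x + n2sq y) := by
  have hzero : ∀ j, x j = 0 ∨ y j = 0 := by
    intro j
    by_cases hxj : x j = 0
    · exact Or.inl hxj
    · right
      by_contra hyj
      exact (Finset.disjoint_left.mp hd (hx j hxj)) (hy j hyj)
  have hsuma : ∀ j, (x + y) j ≠ 0 → j ∈ I ∪ J := by
    intro j hj
    rcases hzero j with h0 | h0
    · exact Finset.mem_union_right _ (hy j (by simpa [h0] using hj))
    · exact Finset.mem_union_left _ (hx j (by simpa [h0] using hj))
  have hsums : ∀ j, (x - y) j ≠ 0 → j ∈ I ∪ J := by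
    intro j hj
    rcases hzero j with h0 | h0
    · exact Finset.mem_union_right _ (hy j (by simpa [h0, sub_eq_zero] using hj))
    · exact Finset.mem_union_left _ (hx j (by simpa [h0] using hj))
  have hcard : (I ∪ J).card ≤ K := by
    rw [Finset.card_union_of_disjoint hd]; exact hK
  have e1 : n2sq (x + y) = n2sq x + n2sq y := by
    unfold n2sq
    rw [← Finset.sum_add_distrib]
    refine Finset.sum_congr rfl fun j _ => ?_
    rcases hzero j with h0 | h0 <;> simp [h0]
  have e2 : n2sq (x - y) = n2sq x + n2sq y := by
    unfold n2sq
    rw [← Finset.sum_add_distrib]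
    refine Finset.sum_congr rfl fun j _ => ?_
    rcases hzero j with h0 | h0 <;> simp [h0]
  have h1 := (rip_global h (I ∪ J) hcard (x + y) hsuma).2
  have h2 := (rip_global h (I ∪ J) hcard (x - y) hsums).1
  rw [e1] at h1
  rw [e2] at h2
  have key : 4 * dot (Φ.mulVec x) (Φ.mulVec y)
      = n2sq (Φ.mulVec (x + y)) - n2sq (Φ.mulVec (x - y)) := by
    rw [Matrix.mulVec_add, Matrix.mulVec_sub]
    unfold n2sq dot
    rw [Finset.mul_sum, ← Finset.sum_sub_distrib]
    refine Finset.sum_congr rfl fun i _ => ?_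
    simp only [Pi.add_apply, Pi.sub_apply]
    ring
  linarith

lemma cross_bound {m n K : ℕ} {δ : ℝ} {Φ : Matrix (Fin m) (Fin n) ℝ} (h : RIP Φ K δ)
    (hδ0 : 0 < δ)
    (I J : Finset (Fin n)) (hd : Disjoint I J) (hK : I.card + J.card ≤ K)
    (x y : Fin n → ℝ) (hx : ∀ j, x j ≠ 0 → j ∈ I) (hy : ∀ j, y j ≠ 0 → j ∈ J) :
    dot (Φ.mulVec x) (Φ.mulVec y) ≤ δ * (n2 x * n2 y) := by
  by_cases hx0 : n2sq x = 0
  · have : x = 0 := n2sq_eq_zero hx0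
    subst this
    simp [dot, Matrix.mulVec_zero, n2, n2sq]
  by_cases hy0 : n2sq y = 0
  · have : y = 0 := n2sq_eq_zero hy0
    subst this
    simp [dot, Matrix.mulVec_zero, n2, n2sq]
  have hxp : 0 < n2sq x := lt_of_le_of_ne (n2sq_nonneg x) (Ne.symm hx0)
  have hyp : 0 < n2sq y := lt_of_le_of_ne (n2sq_nonneg y) (Ne.symm hy0)
  set a := n2 x with ha
  set b := n2 y with hb
  have hap : 0 < a := Real.sqrt_pos.mpr hxp
  have hbp : 0 < b := Real.sqrt_pos.mpr hyp
  have ha2 : a^2 = n2sq x := Real.sq_sqrt (n2sq_nonneg x)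
  have hb2 : b^2 = n2sq y := Real.sq_sqrt (n2sq_nonneg y)
  have hx' : ∀ j, (b • x) j ≠ 0 → j ∈ I := by
    intro j hj
    exact hx j fun h0 => hj (by simp [h0])
  have hy' : ∀ j, (a • y) j ≠ 0 → j ∈ J := by
    intro j hj
    exact hy j fun h0 => hj (by simp [h0])
  have hraw := cross_raw h I J hd hK (b • x) (a • y) hx' hy'
  rw [n2sq_smul, n2sq_smul, ← ha2, ← hb2, Matrix.mulVec_smul, Matrix.mulVec_smul] at hraw
  have hdsc : dot (b • Φ.mulVec x) (a • Φ.mulVec y)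
      = (a * b) * dot (Φ.mulVec x) (Φ.mulVec y) := by
    unfold dot
    rw [Finset.mul_sum]
    refine Finset.sum_congr rfl fun i _ => ?_
    simp [Pi.smul_apply, smul_eq_mul]; ring
  rw [hdsc] at hraw
  nlinarith [mul_pos hap hbp]


set_option maxHeartbeats 1000000 in
/-- modified RIP for `A_{I₁} = P^⊥_{I₁}Φ` on vectors supported on `I₂`:
`(1 - δ/(1-δ))‖u‖₂² ≤ ‖A_{I₁}u‖₂² ≤ (1+δ)‖u‖₂²`. -/
theorem modified_rip {m n : ℕ} (Φ : Matrix (Fin m) (Fin n) ℝ)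
    (I₁ I₂ : Finset (Fin n)) (hdisj : Disjoint I₁ I₂)
    (δ : ℝ) (hδ0 : 0 < δ) (hδ : δ < 1/2)
    (hrank : IsUnit ((subCols Φ I₁)ᵀ * subCols Φ I₁))
    (h : RIP Φ (I₁.card + I₂.card) δ)
    (u : Fin n → ℝ) (hsupp : ∀ j, u j ≠ 0 → j ∈ I₂) :
    (1 - δ/(1-δ)) * n2sq u ≤ n2sq ((projPerp Φ I₁ * Φ).mulVec u) ∧
    n2sq ((projPerp Φ I₁ * Φ).mulVec u) ≤ (1 + δ) * n2sq u := by
  have h1δ : (0:ℝ) < 1 - δ := by linarith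
  set C := subCols Φ I₁ with hC
  set G := Cᵀ * C with hG
  have hGdet : IsUnit G.det := (Matrix.isUnit_iff_isUnit_det G).mp hrank
  set x := Φ.mulVec u with hx
  set P := proj Φ I₁ with hP
  set p := P.mulVec x with hp
  -- projector facts
  have hGsymm : Gᵀ = G := by rw [hG, Matrix.transpose_mul, Matrix.transpose_transpose]
  have hPform : P = C * (G⁻¹ * Cᵀ) := by
    rw [hP]; unfold proj pinv; rw [← hC, ← hG]
  have hPsymm : Pᵀ = P := by
    rw [hP]
    unfold proj pinv
    rw [← hC, ← hG, Matrix.transpose_mul, Matrix.transpose_mul,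
      Matrix.transpose_nonsing_inv, hGsymm, Matrix.transpose_transpose, Matrix.mul_assoc]
  have hPP : P * P = P := by
    rw [hPform]
    calc C * (G⁻¹ * Cᵀ) * (C * (G⁻¹ * Cᵀ))
        = C * (G⁻¹ * (G * (G⁻¹ * Cᵀ))) := by rw [hG]; simp only [Matrix.mul_assoc]
      _ = C * (G⁻¹ * Cᵀ) := by
          rw [← Matrix.mul_assoc G, Matrix.mul_nonsing_inv G hGdet, Matrix.one_mul]
  -- Pythagoras
  have hdotxp : dot x p = n2sq p := by
    have key : dot p p = dot x p := by
      nth_rewrite 1 [hp]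
      rw [dot_mulVec_left, hPsymm, hp, Matrix.mulVec_mulVec, hPP]
    rw [n2sq_eq_dot]; exact key.symm
  have hperp : (projPerp Φ I₁ * Φ).mulVec u = x - p := by
    rw [← Matrix.mulVec_mulVec, ← hx]
    unfold projPerp
    rw [← hP, Matrix.sub_mulVec, Matrix.one_mulVec, ← hp]
  have hpyth : n2sq ((projPerp Φ I₁ * Φ).mulVec u) = n2sq x - n2sq p := by
    rw [hperp, n2sq_sub, hdotxp]; ring
  -- RIP on u (support I₂)
  have hI2card : I₂.card ≤ I₁.card + I₂.card := Nat.le_add_left _ _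
  have hI1card : I₁.card ≤ I₁.card + I₂.card := Nat.le_add_right _ _
  have hripu := rip_global h I₂ hI2card u hsupp
  -- the c vector
  set c : {j // j ∈ I₁} → ℝ := Cᵀ.mulVec x with hc
  set z : {j // j ∈ I₁} → ℝ := G⁻¹.mulVec c with hz
  have hpz : p = C.mulVec z := by
    rw [hp, hPform, ← Matrix.mulVec_mulVec, ← Matrix.mulVec_mulVec, ← hc, ← hz]
  -- ‖c‖² ≤ δ² ‖u‖²
  have hcdot : n2sq c = dot (Φ.mulVec (ext0 I₁ c)) (Φ.mulVec u) := by
    rw [mulVec_ext0, ← hC, ← hx, dot_mulVec_left, ← hc, n2sq_eq_dot]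
  have hcross := cross_bound h hδ0 I₁ I₂ hdisj le_rfl (ext0 I₁ c) u
    (ext0_supp I₁ c) hsupp
  have hncc : n2 (ext0 I₁ c) = n2 c := by unfold n2; rw [n2sq_ext0]
  rw [← hcdot, hncc] at hcross
  have hcsq : n2sq c ≤ δ^2 * n2sq u := by
    have ha2 : (n2 c)^2 = n2sq c := Real.sq_sqrt (n2sq_nonneg c)
    have hb2 : (n2 u)^2 = n2sq u := Real.sq_sqrt (n2sq_nonneg u)
    have han : 0 ≤ n2 c := Real.sqrt_nonneg _
    have hbn : 0 ≤ n2 u := Real.sqrt_nonneg _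
    have h1 : n2 c ≤ δ * n2 u := by
      rcases eq_or_lt_of_le han with h0 | h0
      · rw [← h0]; positivity
      · nlinarith
    nlinarith
  -- ‖p‖² ≤ ‖c‖²/(1-δ)
  have hripz := (h I₁ hI1card z).1
  rw [← hC, ← hpz] at hripz
  have hGz : G.mulVec z = c := by
    rw [hz, Matrix.mulVec_mulVec, Matrix.mul_nonsing_inv G hGdet, Matrix.one_mulVec]
  have hpc : n2sq p = dot z c := by
    rw [hpz, n2sq_eq_dot, dot_mulVec_left, Matrix.mulVec_mulVec, ← hG, hGz]
  have hCS : (n2sq p)^2 ≤ n2sq z * n2sq c := by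
    rw [hpc]
    unfold dot n2sq
    exact Finset.sum_mul_sq_le_sq_mul_sq _ _ _
  have hpbound : (1 - δ) * n2sq p ≤ n2sq c := by
    by_cases hp0 : n2sq p = 0
    · rw [hp0]; simpa using n2sq_nonneg c
    · have hppos : 0 < n2sq p := lt_of_le_of_ne (n2sq_nonneg p) (Ne.symm hp0)
      nlinarith [mul_le_mul_of_nonneg_right hripz (n2sq_nonneg c), hCS, hppos]
  have hpd2 : (1 - δ) * n2sq p ≤ δ^2 * n2sq u := le_trans hpbound hcsq
  constructor
  · rw [hpyth]
    have hconst : 1 - δ/(1-δ) = (1 - 2*δ)/(1-δ) := by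
      field_simp
      ring
    rw [hconst, div_mul_eq_mul_div, div_le_iff₀ h1δ]
    nlinarith [mul_le_mul_of_nonneg_left hripu.1 (le_of_lt h1δ), hpd2, n2sq_nonneg u]
  · rw [hpyth]
    have h2 := hripu.2
    have h3 := n2sq_nonneg p
    linarith
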